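/- Let p be a prime, n ≥ 2, and f, g ∈ ℤ_p[x_1,…,x_n]. Let a ∈ ℤ_p^n be such that f(a) ≡ 0 mod p, g(a) ≡ 0 mod p, and the 2×n Jacobian matrix with rows (∂f/∂x_1(a),…,∂f/∂x_n(a)) and (∂g/∂x_1(a),…,∂g/∂x_n(a)) has rank 2 modulo p. Then for all positive integers k and l, the set {x ∈ a + (pℤ_p)^n : ord f(x) = k and ord g(x) = l} has Haar measure p^{−n−k−l}(p−1)^2. -/

import Mathlib

open MeasureTheory MvPolynomial

/-! The measure of `{x ∈ a+(pℤ_p)^n : ord f(x) = k, ord g(x) = l}` equals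
`p^{-n-k-l}(p-1)^2` when the Jacobian of `(f,g)` at `a` has rank `2` modulo `p`. -/

noncomputable instance (p : ℕ) [Fact p.Prime] : MeasurableSpace ℤ_[p] := borel _
instance (p : ℕ) [Fact p.Prime] : BorelSpace ℤ_[p] := ⟨rfl⟩

/-- The Haar measure on `ℤ_p^n`, normalized so that `μ(ℤ_p^n) = 1`. -/
noncomputable def padicHaar (p : ℕ) [Fact p.Prime] (n : ℕ) : Measure (Fin n → ℤ_[p]) :=
  Measure.addHaarMeasure ⟨⟨Set.univ, isCompact_univ⟩, by simp⟩

variable (p : ℕ) [hp : Fact p.Prime] (n : ℕ)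

lemma dvd_iff_toZMod (x : ℤ_[p]) : (p:ℤ_[p]) ∣ x ↔ PadicInt.toZMod x = 0 := by
  rw [← Ideal.mem_span_singleton, ← PadicInt.maximalIdeal_eq_span_p, ← PadicInt.ker_toZMod,
    RingHom.mem_ker]

lemma dvd_pow_iff_norm_le (s : ℕ) (x : ℤ_[p]) :
    (p:ℤ_[p])^s ∣ x ↔ ‖x‖ ≤ (p:ℝ)^(-(s:ℤ)) := by
  rw [PadicInt.norm_le_pow_iff_mem_span_pow, Ideal.mem_span_singleton]

lemma meas_ball_dvd (s : ℕ) : MeasurableSet {y : ℤ_[p] | (p:ℤ_[p])^s ∣ y} := by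
  have : {y : ℤ_[p] | (p:ℤ_[p])^s ∣ y} = Metric.closedBall 0 ((p:ℝ)^(-(s:ℤ))) := by
    ext y
    simp [Metric.mem_closedBall, dist_zero_right, dvd_pow_iff_norm_le]
  rw [this]; exact measurableSet_closedBall

lemma meas_dvd_pre (s : ℕ) (h : (Fin n → ℤ_[p]) → ℤ_[p]) (hc : Continuous h) (d : ℤ_[p]) :
    MeasurableSet {x | (p:ℤ_[p])^s ∣ h x - d} :=
  ((hc.sub continuous_const).measurable) (meas_ball_dvd p s)

lemma meas_coset (b : Fin n → ℤ_[p]) :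
    MeasurableSet {x : Fin n → ℤ_[p] | ∀ i, (p:ℤ_[p]) ∣ x i - b i} := by
  have : {x : Fin n → ℤ_[p] | ∀ i, (p:ℤ_[p]) ∣ x i - b i}
      = ⋂ i, {x : Fin n → ℤ_[p] | (p:ℤ_[p])^1 ∣ x i - b i} := by
    ext x; simp [pow_one]
  rw [this]
  exact MeasurableSet.iInter fun i => meas_dvd_pre p n 1 (fun x => x i) (continuous_apply i) (b i)

lemma padicHaar_univ : padicHaar p n Set.univ = 1 := Measure.addHaarMeasure_self

instance : (padicHaar p n).IsAddLeftInvariant := by unfold padicHaar; infer_instance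
instance : IsFiniteMeasure (padicHaar p n) :=
  ⟨by rw [padicHaar_univ]; exact ENNReal.one_lt_top⟩

lemma measure_coset_eq (b : Fin n → ℤ_[p]) :
    padicHaar p n {x : Fin n → ℤ_[p] | ∀ i, (p:ℤ_[p]) ∣ x i - b i}
      = padicHaar p n {x : Fin n → ℤ_[p] | ∀ i, (p:ℤ_[p]) ∣ x i} := by
  have h : {x : Fin n → ℤ_[p] | ∀ i, (p:ℤ_[p]) ∣ x i - b i}
      = ((-b) + ·) ⁻¹' {x : Fin n → ℤ_[p] | ∀ i, (p:ℤ_[p]) ∣ x i} := by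
    ext x
    simp only [Set.mem_preimage, Set.mem_setOf_eq, Pi.add_apply, Pi.neg_apply]
    exact forall_congr' fun i => by rw [neg_add_eq_sub]
  rw [h, measure_preimage_add]

lemma measure_coset (a : Fin n → ℤ_[p]) :
    padicHaar p n {x : Fin n → ℤ_[p] | ∀ i, (p:ℤ_[p]) ∣ x i - a i} = (p:ENNReal)^(-(n:ℤ)) := by
  classical
  set μ := padicHaar p n with hμ
  have hCeq : ∀ b : Fin n → ZMod p, {x : Fin n → ℤ_[p] | ∀ i, PadicInt.toZMod (x i) = b i}
      = {x : Fin n → ℤ_[p] | ∀ i, (p:ℤ_[p]) ∣ x i - (fun i => ((b i).val : ℤ_[p])) i} := by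
    intro b; ext x
    refine forall_congr' fun i => ?_
    rw [dvd_iff_toZMod, map_sub, sub_eq_zero, map_natCast, ZMod.natCast_val, ZMod.cast_id]
  have hcover : (Set.univ : Set (Fin n → ℤ_[p]))
      = ⋃ (b : Fin n → ZMod p), {x | ∀ i, PadicInt.toZMod (x i) = b i} := by
    ext x; simp only [Set.mem_univ, Set.mem_iUnion, Set.mem_setOf_eq, true_iff]
    exact ⟨fun i => PadicInt.toZMod (x i), fun i => rfl⟩
  have hdisj : Pairwise (Function.onFun Disjoint
      fun b : Fin n → ZMod p => {x : Fin n → ℤ_[p] | ∀ i, PadicInt.toZMod (x i) = b i}) := by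
    intro b b' hbb
    simp only [Function.onFun, Set.disjoint_left, Set.mem_setOf_eq]
    intro x hx hx'
    exact hbb (funext fun i => (hx i).symm.trans (hx' i))
  have hmeas : ∀ b : Fin n → ZMod p,
      MeasurableSet {x : Fin n → ℤ_[p] | ∀ i, PadicInt.toZMod (x i) = b i} := by
    intro b; rw [hCeq b]; exact meas_coset p n _
  have h1 : μ Set.univ = ∑' b : Fin n → ZMod p, μ {x | ∀ i, PadicInt.toZMod (x i) = b i} := by
    rw [hcover]; exact measure_iUnion hdisj hmeas
  have h2 : ∀ b : Fin n → ZMod p,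
      μ {x | ∀ i, PadicInt.toZMod (x i) = b i} = μ {x : Fin n → ℤ_[p] | ∀ i, (p:ℤ_[p]) ∣ x i} := by
    intro b; rw [hCeq b, measure_coset_eq]
  rw [padicHaar_univ, tsum_fintype] at h1
  simp only [h2] at h1
  rw [Finset.sum_const, Finset.card_univ, Fintype.card_pi] at h1
  have hcard : ∏ _i : Fin n, Fintype.card (ZMod p) = p ^ n := by
    simp [ZMod.card, Finset.prod_const]
  rw [hcard, nsmul_eq_mul, Nat.cast_pow] at h1
  -- h1 : 1 = (p:ENNReal)^n * μ V₀
  have hp0 : (p:ENNReal) ≠ 0 := by exact_mod_cast (Fact.out : p.Prime).ne_zero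
  have hpt : (p:ENNReal) ≠ ⊤ := ENNReal.natCast_ne_top p
  have key : μ {x : Fin n → ℤ_[p] | ∀ i, (p:ℤ_[p]) ∣ x i} = (p:ENNReal)^(-(n:ℤ)) := by
    have := h1.symm
    have hpn0 : ((p:ENNReal))^n ≠ 0 := pow_ne_zero _ hp0
    have hpnt : ((p:ENNReal))^n ≠ ⊤ := ENNReal.pow_ne_top hpt
    rw [← ENNReal.mul_right_inj hpn0 hpnt]
    rw [this]
    rw [← zpow_natCast, ← ENNReal.zpow_add hp0 hpt]
    simp
  rw [measure_coset_eq p n a, key]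

lemma dvd_eval_sub' {R} [CommRing R] {m : ℕ} (c : R) (f : MvPolynomial (Fin m) R)
    (x y : Fin m → R) (h : ∀ i, c ∣ x i - y i) : c ∣ eval x f - eval y f := by
  induction f using MvPolynomial.induction_on with
  | C r => simp
  | add f g hf hg => have := dvd_add hf hg; convert this using 1; simp; ring
  | mul_X f i hf =>
      have : eval x (f * X i) - eval y (f * X i)
          = (eval x f - eval y f) * x i + eval y f * (x i - y i) := by simp; ring
      rw [this]
      exact dvd_add (hf.mul_right _) ((h i).mul_left _)

lemma taylor_dvd {R} [CommRing R] {m : ℕ} (c : R) (f : MvPolynomial (Fin m) R)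
    (x v : Fin m → R) :
    c ^ 2 ∣ eval (fun i => x i + c * v i) f - eval x f
      - c * ∑ j, v j * eval x (pderiv j f) := by
  induction f using MvPolynomial.induction_on with
  | C r => simp
  | add f g hf hg =>
      have := dvd_add hf hg; convert this using 1
      simp only [map_add, mul_add, Finset.sum_add_distrib, Finset.mul_sum]
      ring
  | mul_X f i hf =>
      obtain ⟨E, hE⟩ := hf
      obtain ⟨u, hu⟩ := dvd_eval_sub' c f (fun i => x i + c * v i) x (fun i => ⟨v i, by ring⟩)
      refine ⟨E * x i + v i * u, ?_⟩
      have hsum : ∑ j, v j * eval x (pderiv j (f * X i))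
          = (∑ j, v j * eval x (pderiv j f)) * x i + v i * eval x f := by
        simp only [pderiv_mul, pderiv_X, map_add, map_mul, eval_X, Pi.single_apply,
          apply_ite (eval x), map_one, map_zero, mul_ite, mul_one, mul_zero, mul_add]
        rw [Finset.sum_add_distrib, Finset.sum_mul]
        congr 1
        · exact Finset.sum_congr rfl (fun j _ => by ring)
        · simp [Finset.sum_ite_eq]
      simp only [eval_mul, eval_X]
      rw [hsum]
      linear_combination (x i) * hE + (c * v i) * hu

lemma cyclic_eq (F : ZMod p → ENNReal) (h : ∀ j, F j ≤ F (j+1)) : ∀ j j', F j = F j' := by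
  haveI : NeZero p := ⟨(Fact.out : p.Prime).ne_zero⟩
  have key : ∀ (m : ℕ) (j), F j ≤ F (j + (m : ZMod p)) := by
    intro m
    induction m with
    | zero => simp
    | succ m ih =>
        intro j
        calc F j ≤ F (j + (m : ZMod p)) := ih j
          _ ≤ F (j + (m : ZMod p) + 1) := h _
          _ = F (j + ((m + 1 : ℕ) : ZMod p)) := by push_cast; ring_nf
  have hle : ∀ j j', F j ≤ F j' := by
    intro j j'
    have := key (j' - j).val j
    have h2 : j + (((j' - j).val : ℕ) : ZMod p) = j' := by
      rw [ZMod.natCast_val, ZMod.cast_id]; ring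
    rwa [h2] at this
  exact fun j j' => le_antisymm (hle j j') (hle j' j)

lemma step_lemma (f g : MvPolynomial (Fin n) ℤ_[p]) (a v : Fin n → ℤ_[p])
    (hv1 : PadicInt.toZMod (∑ j, v j * eval a (pderiv j f)) = 1)
    (hv0 : PadicInt.toZMod (∑ j, v j * eval a (pderiv j g)) = 0)
    (s t : ℕ) (hs : 1 ≤ s) (hts : t ≤ s + 1) :
    padicHaar p n {x | (∀ i, (p:ℤ_[p]) ∣ x i - a i) ∧ (p:ℤ_[p])^s ∣ eval x f ∧ (p:ℤ_[p])^t ∣ eval x g}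
      = p * padicHaar p n {x | (∀ i, (p:ℤ_[p]) ∣ x i - a i) ∧ (p:ℤ_[p])^(s+1) ∣ eval x f ∧ (p:ℤ_[p])^t ∣ eval x g} := by
  classical
  haveI : NeZero p := ⟨(Fact.out : p.Prime).ne_zero⟩
  set μ := padicHaar p n with hμ
  set c : ℤ_[p] := (p:ℤ_[p])^s with hc
  have hp0 : (p:ℤ_[p]) ≠ 0 := Nat.cast_ne_zero.mpr (Fact.out : p.Prime).ne_zero
  have hpc : (p:ℤ_[p]) ∣ c := dvd_pow_self _ (by omega)
  set B : ZMod p → Set (Fin n → ℤ_[p]) := fun j =>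
    {x | (∀ i, (p:ℤ_[p]) ∣ x i - a i) ∧
      ((p:ℤ_[p])^(s+1) ∣ eval x f - c * ((j.val : ℕ) : ℤ_[p])) ∧ (p:ℤ_[p])^t ∣ eval x g} with hB
  -- toZMod of the directional derivative sums at any point of the coset
  have hS : ∀ (F : MvPolynomial (Fin n) ℤ_[p]) (x : Fin n → ℤ_[p]), (∀ i, (p:ℤ_[p]) ∣ x i - a i) →
      PadicInt.toZMod (∑ j, v j * eval x (pderiv j F))
        = PadicInt.toZMod (∑ j, v j * eval a (pderiv j F)) := by
    intro F x hx
    rw [← sub_eq_zero, ← map_sub, ← dvd_iff_toZMod, ← Finset.sum_sub_distrib]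
    refine Finset.dvd_sum fun j _ => ?_
    rw [← mul_sub]
    exact Dvd.dvd.mul_left (dvd_eval_sub' _ _ _ _ hx) _
  have hnatval : ∀ j : ZMod p, PadicInt.toZMod ((j.val : ℕ) : ℤ_[p]) = j := by
    intro j
    rw [map_natCast, ZMod.natCast_val, ZMod.cast_id]
  -- membership step under translation
  have hstep : ∀ (j : ZMod p) (x : Fin n → ℤ_[p]), x ∈ B j → (fun i => x i + c * v i) ∈ B (j+1) := by
    intro j x hx
    obtain ⟨hxc, hlev, hxg⟩ := hx
    have hxf : (p:ℤ_[p])^s ∣ eval x f := by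
      have h1 : (p:ℤ_[p])^s ∣ eval x f - c * ((j.val:ℕ):ℤ_[p]) :=
        (pow_dvd_pow _ (by omega)).trans hlev
      have h2 : (p:ℤ_[p])^s ∣ c * ((j.val:ℕ):ℤ_[p]) := Dvd.dvd.mul_right dvd_rfl _
      simpa using dvd_add h1 h2
    have hs12s : (p:ℤ_[p])^(s+1) ∣ c^2 := by
      rw [hc, ← pow_mul]
      exact pow_dvd_pow _ (by omega)
    have hTf := hs12s.trans (taylor_dvd c f x v)
    have hTg := hs12s.trans (taylor_dvd c g x v)
    have hSf : PadicInt.toZMod (∑ j, v j * eval x (pderiv j f)) = 1 := (hS f x hxc).trans hv1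
    have hSg : (p:ℤ_[p]) ∣ ∑ j, v j * eval x (pderiv j g) := by
      rw [dvd_iff_toZMod]
      exact (hS g x hxc).trans hv0
    refine ⟨?_, ?_, ?_⟩
    · intro i
      have : (fun i => x i + c * v i) i - a i = (x i - a i) + c * v i := by ring
      rw [this]
      exact dvd_add (hxc i) (hpc.mul_right _)
    · -- level condition
      set Sf := ∑ j, v j * eval x (pderiv j f) with hSfdef
      set D : ℤ_[p] := Sf + ((j.val:ℕ):ℤ_[p]) - (((j+1).val:ℕ):ℤ_[p]) with hD
      have hDdvd : (p:ℤ_[p]) ∣ D := by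
        rw [dvd_iff_toZMod, hD, map_sub, map_add, hSf, hnatval, hnatval]
        ring
      have hid : eval (fun i => x i + c * v i) f - c * (((j+1).val:ℕ):ℤ_[p])
          = (eval (fun i => x i + c * v i) f - eval x f - c * Sf)
            + (eval x f - c * ((j.val:ℕ):ℤ_[p])) + c * D := by
        rw [hD]; ring
      rw [hid]
      refine dvd_add (dvd_add hTf hlev) ?_
      rw [pow_succ]
      exact mul_dvd_mul dvd_rfl hDdvd
    · set Sg := ∑ j, v j * eval x (pderiv j g) with hSgdef
      have hid : eval (fun i => x i + c * v i) g
          = eval x g + (eval (fun i => x i + c * v i) g - eval x g - c * Sg) + c * Sg := by ring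
      rw [hid]
      refine dvd_add (dvd_add hxg ((pow_dvd_pow _ hts).trans hTg)) ?_
      refine (pow_dvd_pow _ hts).trans ?_
      rw [pow_succ]
      exact mul_dvd_mul dvd_rfl hSg
  -- measurability
  have hmeasB : ∀ j, MeasurableSet (B j) := by
    intro j
    have : B j = {x : Fin n → ℤ_[p] | ∀ i, (p:ℤ_[p]) ∣ x i - a i}
        ∩ ({x | (p:ℤ_[p])^(s+1) ∣ eval x f - c * ((j.val:ℕ):ℤ_[p])}
          ∩ {x | (p:ℤ_[p])^t ∣ eval x g - 0}) := by
      ext x; simp [hB, Set.mem_inter_iff, and_assoc, sub_zero]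
    rw [this]
    exact (meas_coset p n a).inter
      ((meas_dvd_pre p n (s+1) _ (MvPolynomial.continuous_eval f) _).inter
        (meas_dvd_pre p n t _ (MvPolynomial.continuous_eval g) 0))
  -- disjointness
  have hdisj : Pairwise (Function.onFun Disjoint B) := by
    intro j j' hjj
    rw [Function.onFun, Set.disjoint_left]
    rintro x ⟨_, hj, _⟩ ⟨_, hj', _⟩
    apply hjj
    have h1 : (p:ℤ_[p])^(s+1) ∣ c * (((j'.val:ℕ):ℤ_[p]) - ((j.val:ℕ):ℤ_[p])) := by
      have := dvd_sub hj hj'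
      convert this using 1
      ring
    rw [pow_succ] at h1
    have h3 : (p:ℤ_[p]) ∣ ((j'.val:ℕ):ℤ_[p]) - ((j.val:ℕ):ℤ_[p]) :=
      (mul_dvd_mul_iff_left (pow_ne_zero s hp0)).mp h1
    rw [dvd_iff_toZMod, map_sub, hnatval, hnatval, sub_eq_zero] at h3
    exact h3.symm
  -- cover
  have hcover : {x : Fin n → ℤ_[p] | (∀ i, (p:ℤ_[p]) ∣ x i - a i) ∧ (p:ℤ_[p])^s ∣ eval x f
      ∧ (p:ℤ_[p])^t ∣ eval x g} = ⋃ j, B j := by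
    ext x
    simp only [Set.mem_setOf_eq, Set.mem_iUnion]
    constructor
    · rintro ⟨hxc, ⟨u, hu⟩, hxg⟩
      refine ⟨PadicInt.toZMod u, hxc, ?_, hxg⟩
      have hid : eval x f - c * ((((PadicInt.toZMod u).val:ℕ)):ℤ_[p])
          = c * (u - (((PadicInt.toZMod u).val:ℕ):ℤ_[p])) := by rw [hu]; ring
      rw [hid, pow_succ]
      refine mul_dvd_mul dvd_rfl ?_
      rw [dvd_iff_toZMod, map_sub, hnatval]
      ring
    · rintro ⟨j, hxc, hlev, hxg⟩
      refine ⟨hxc, ?_, hxg⟩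
      have h1 : (p:ℤ_[p])^s ∣ eval x f - c * ((j.val:ℕ):ℤ_[p]) :=
        (pow_dvd_pow _ (by omega)).trans hlev
      have h2 : (p:ℤ_[p])^s ∣ c * ((j.val:ℕ):ℤ_[p]) := Dvd.dvd.mul_right dvd_rfl _
      simpa using dvd_add h1 h2
  -- translation inequality and equality of all levels
  have hle : ∀ j, μ (B j) ≤ μ (B (j+1)) := by
    intro j
    have hsub : B j ⊆ ((c • v) + ·) ⁻¹' B (j+1) := by
      intro x hx
      have h2 : c • v + x = fun i => x i + c * v i := by
        funext i
        simp [Pi.smul_apply, smul_eq_mul, add_comm]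
      rw [Set.mem_preimage, h2]
      exact hstep j x hx
    calc μ (B j) ≤ μ (((c • v) + ·) ⁻¹' B (j+1)) := measure_mono hsub
      _ = μ (B (j+1)) := measure_preimage_add μ _ _
  have hconst := cyclic_eq p (fun j => μ (B j)) hle
  -- sum up
  have hsum : μ {x : Fin n → ℤ_[p] | (∀ i, (p:ℤ_[p]) ∣ x i - a i) ∧ (p:ℤ_[p])^s ∣ eval x f
      ∧ (p:ℤ_[p])^t ∣ eval x g} = ∑' j : ZMod p, μ (B j) := by
    rw [hcover]
    exact measure_iUnion hdisj hmeasB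
  rw [hsum, tsum_fintype]
  have hsum2 : ∑ j : ZMod p, μ (B j) = (Fintype.card (ZMod p)) * μ (B 0) := by
    rw [Finset.sum_congr rfl (fun j _ => hconst j 0), Finset.sum_const, Finset.card_univ,
      nsmul_eq_mul]
  rw [hsum2, ZMod.card]
  congr 1
  have : B 0 = {x : Fin n → ℤ_[p] | (∀ i, (p:ℤ_[p]) ∣ x i - a i) ∧ (p:ℤ_[p])^(s+1) ∣ eval x f
      ∧ (p:ℤ_[p])^t ∣ eval x g} := by
    ext x
    simp [hB, ZMod.val_zero]
  rw [this]

lemma rank_surj {m : ℕ} (M : Matrix (Fin 2) (Fin m) (ZMod p)) (h : M.rank = 2)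
    (t : Fin 2 → ZMod p) : ∃ u : Fin m → ZMod p, M.mulVec u = t := by
  have htop : LinearMap.range M.mulVecLin = ⊤ := by
    apply Submodule.eq_top_of_finrank_eq
    rw [show Module.finrank (ZMod p) (LinearMap.range M.mulVecLin) = M.rank from rfl, h]
    simp [Module.finrank_pi]
  have ht : t ∈ LinearMap.range M.mulVecLin := htop ▸ Submodule.mem_top
  obtain ⟨u, hu⟩ := ht
  exact ⟨u, hu⟩

lemma toZMod_natCast_val (j : ZMod p) : PadicInt.toZMod ((j.val : ℕ) : ℤ_[p]) = j := by
  haveI : NeZero p := ⟨(Fact.out : p.Prime).ne_zero⟩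
  rw [map_natCast, ZMod.natCast_val, ZMod.cast_id]

lemma exists_dir {n : ℕ} (f g : MvPolynomial (Fin n) ℤ_[p]) (a : Fin n → ℤ_[p])
    (hrank : Matrix.rank (Matrix.of fun (i : Fin 2) (j : Fin n) =>
      PadicInt.toZMod (eval a (pderiv j (![f, g] i)))) = 2) (t : Fin 2 → ZMod p) :
    ∃ v : Fin n → ℤ_[p],
      PadicInt.toZMod (∑ j, v j * eval a (pderiv j f)) = t 0 ∧
      PadicInt.toZMod (∑ j, v j * eval a (pderiv j g)) = t 1 := by
  obtain ⟨u, hu⟩ := rank_surj p _ hrank t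
  refine ⟨fun j => ((u j).val : ℤ_[p]), ?_, ?_⟩
  · have h0 := congrFun hu 0
    rw [Matrix.mulVec, dotProduct] at h0
    rw [map_sum, ← h0]
    refine Finset.sum_congr rfl fun j _ => ?_
    rw [map_mul, toZMod_natCast_val]
    simp [Matrix.of_apply]
    ring
  · have h1 := congrFun hu 1
    rw [Matrix.mulVec, dotProduct] at h1
    rw [map_sum, ← h1]
    refine Finset.sum_congr rfl fun j _ => ?_
    rw [map_mul, toZMod_natCast_val]
    simp [Matrix.of_apply]
    ring

lemma meas_Aset (f g : MvPolynomial (Fin n) ℤ_[p]) (a : Fin n → ℤ_[p]) (s t : ℕ) :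
    MeasurableSet {x : Fin n → ℤ_[p] | (∀ i, (p:ℤ_[p]) ∣ x i - a i) ∧ (p:ℤ_[p])^s ∣ eval x f
      ∧ (p:ℤ_[p])^t ∣ eval x g} := by
  have : {x : Fin n → ℤ_[p] | (∀ i, (p:ℤ_[p]) ∣ x i - a i) ∧ (p:ℤ_[p])^s ∣ eval x f
      ∧ (p:ℤ_[p])^t ∣ eval x g} = {x : Fin n → ℤ_[p] | ∀ i, (p:ℤ_[p]) ∣ x i - a i}
      ∩ ({x | (p:ℤ_[p])^s ∣ eval x f - 0} ∩ {x | (p:ℤ_[p])^t ∣ eval x g - 0}) := by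
    ext x; simp [Set.mem_inter_iff, and_assoc, sub_zero]
  rw [this]
  exact (meas_coset p n a).inter
    ((meas_dvd_pre p n s _ (MvPolynomial.continuous_eval f) 0).inter
      (meas_dvd_pre p n t _ (MvPolynomial.continuous_eval g) 0))

lemma M_formula (f g : MvPolynomial (Fin n) ℤ_[p]) (a v w : Fin n → ℤ_[p])
    (hfa : (p:ℤ_[p]) ∣ eval a f) (hga : (p:ℤ_[p]) ∣ eval a g)
    (hv1 : PadicInt.toZMod (∑ j, v j * eval a (pderiv j f)) = 1)
    (hv0 : PadicInt.toZMod (∑ j, v j * eval a (pderiv j g)) = 0)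
    (hw0 : PadicInt.toZMod (∑ j, w j * eval a (pderiv j f)) = 0)
    (hw1 : PadicInt.toZMod (∑ j, w j * eval a (pderiv j g)) = 1)
    (s t : ℕ) (hs : 1 ≤ s) (ht : 1 ≤ t) :
    padicHaar p n {x : Fin n → ℤ_[p] | (∀ i, (p:ℤ_[p]) ∣ x i - a i) ∧ (p:ℤ_[p])^s ∣ eval x f
      ∧ (p:ℤ_[p])^t ∣ eval x g} = (p:ENNReal) ^ ((2:ℤ) - n - s - t) := by
  have hp0 : (p:ENNReal) ≠ 0 := Nat.cast_ne_zero.mpr (Fact.out : p.Prime).ne_zero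
  have hpt : (p:ENNReal) ≠ ⊤ := ENNReal.natCast_ne_top p
  have hswap : ∀ (s' t' : ℕ), {x : Fin n → ℤ_[p] | (∀ i, (p:ℤ_[p]) ∣ x i - a i)
      ∧ (p:ℤ_[p])^t' ∣ eval x g ∧ (p:ℤ_[p])^s' ∣ eval x f}
      = {x : Fin n → ℤ_[p] | (∀ i, (p:ℤ_[p]) ∣ x i - a i) ∧ (p:ℤ_[p])^s' ∣ eval x f
        ∧ (p:ℤ_[p])^t' ∣ eval x g} := by
    intro s' t'; ext x
    simp only [Set.mem_setOf_eq]
    tauto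
  revert hs ht
  obtain ⟨N, hN⟩ : ∃ N, s + t = N := ⟨s + t, rfl⟩
  revert s t
  induction N using Nat.strong_induction_on with
  | _ N ih =>
  intro s t hN hs ht
  subst hN
  by_cases h11 : s = 1 ∧ t = 1
  · obtain ⟨rfl, rfl⟩ := h11
    have hset : {x : Fin n → ℤ_[p] | (∀ i, (p:ℤ_[p]) ∣ x i - a i) ∧ (p:ℤ_[p])^1 ∣ eval x f
        ∧ (p:ℤ_[p])^1 ∣ eval x g} = {x : Fin n → ℤ_[p] | ∀ i, (p:ℤ_[p]) ∣ x i - a i} := by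
      ext x
      simp only [Set.mem_setOf_eq, pow_one, and_iff_left_iff_imp]
      intro hx
      constructor
      · have := dvd_add (dvd_eval_sub' (p:ℤ_[p]) f x a hx) hfa
        simpa using this
      · have := dvd_add (dvd_eval_sub' (p:ℤ_[p]) g x a hx) hga
        simpa using this
    rw [hset, measure_coset]
    congr 1
    push_cast
    ring
  · by_cases hst : t ≤ s
    · have hs2 : 2 ≤ s := by omega
      have hstep := step_lemma p n f g a v hv1 hv0 (s-1) t (by omega) (by omega)
      have hs1 : s - 1 + 1 = s := by omega
      rw [hs1] at hstep
      have ihv := ih (s - 1 + t) (by omega) (s-1) t rfl (by omega) ht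
      rw [ihv] at hstep
      have hexp : ((2:ℤ) - n - (↑(s-1):ℤ) - t) = 1 + ((2:ℤ) - n - s - t) := by
        have : ((s-1 : ℕ) : ℤ) = (s:ℤ) - 1 := by push_cast [Nat.cast_sub hs]; ring
        rw [this]; ring
      rw [hexp, ENNReal.zpow_add hp0 hpt, zpow_one] at hstep
      exact ((ENNReal.mul_right_inj hp0 hpt).mp hstep.symm)
    · have ht2 : 2 ≤ t := by omega
      have hstep := step_lemma p n g f a w hw1 hw0 (t-1) s (by omega) (by omega)
      have ht1 : t - 1 + 1 = t := by omega
      rw [ht1, hswap, hswap] at hstep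
      have ihv := ih (s + (t - 1)) (by omega) s (t-1) rfl hs (by omega)
      rw [ihv] at hstep
      have hexp : ((2:ℤ) - n - s - (↑(t-1):ℤ)) = 1 + ((2:ℤ) - n - s - t) := by
        have : ((t-1 : ℕ) : ℤ) = (t:ℤ) - 1 := by push_cast [Nat.cast_sub ht]; ring
        rw [this]; ring
      rw [hexp, ENNReal.zpow_add hp0 hpt, zpow_one] at hstep
      exact ((ENNReal.mul_right_inj hp0 hpt).mp hstep.symm)

lemma norm_eq_pow_iff_dvd (x : ℤ_[p]) (k : ℕ) :
    ‖x‖ = (p:ℝ)^(-(k:ℤ)) ↔ ((p:ℤ_[p])^k ∣ x ∧ ¬ (p:ℤ_[p])^(k+1) ∣ x) := by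
  have hp1 : (1:ℝ) < p := by exact_mod_cast (Fact.out : p.Prime).one_lt
  rw [dvd_pow_iff_norm_le, dvd_pow_iff_norm_le]
  constructor
  · intro h
    rw [h]
    refine ⟨le_refl _, ?_⟩
    push_neg
    exact zpow_lt_zpow_right₀ hp1 (by omega)
  · rintro ⟨h1, h2⟩
    have hx : x ≠ 0 := by
      rintro rfl
      refine h2 ?_
      rw [norm_zero]
      exact le_of_lt (zpow_pos (by linarith) _)
    rw [PadicInt.norm_le_pow_iff_le_valuation x hx] at h1 h2
    rw [PadicInt.norm_eq_zpow_neg_valuation hx]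
    congr 1
    omega

theorem measure_ord_eq (p : ℕ) [Fact p.Prime] (n : ℕ) (hn : 2 ≤ n)
    (f g : MvPolynomial (Fin n) ℤ_[p]) (a : Fin n → ℤ_[p])
    (hfa : (p : ℤ_[p]) ∣ eval a f) (hga : (p : ℤ_[p]) ∣ eval a g)
    (hrank : Matrix.rank (Matrix.of fun (i : Fin 2) (j : Fin n) =>
      PadicInt.toZMod (eval a (pderiv j (![f, g] i)))) = 2)
    (k l : ℕ) (hk : 1 ≤ k) (hl : 1 ≤ l) :
    padicHaar p n {x : Fin n → ℤ_[p] | (∀ i, (p : ℤ_[p]) ∣ (x i - a i)) ∧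
        ‖eval x f‖ = (p : ℝ) ^ (-(k : ℤ)) ∧ ‖eval x g‖ = (p : ℝ) ^ (-(l : ℤ))}
      = (p : ENNReal) ^ (-(n : ℤ) - (k : ℤ) - (l : ℤ)) * ((p : ENNReal) - 1) ^ 2 := by
  classical
  have hp0 : (p:ENNReal) ≠ 0 := Nat.cast_ne_zero.mpr (Fact.out : p.Prime).ne_zero
  have hpt : (p:ENNReal) ≠ ⊤ := ENNReal.natCast_ne_top p
  have hp1 : (1:ENNReal) ≤ p := by exact_mod_cast (Fact.out : p.Prime).one_lt.le
  obtain ⟨v, hv1, hv0⟩ := exists_dir p f g a hrank ![1, 0]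
  obtain ⟨w, hw0, hw1⟩ := exists_dir p f g a hrank ![0, 1]
  simp only [Matrix.cons_val_zero, Matrix.cons_val_one, Matrix.head_cons] at hv1 hv0 hw0 hw1
  set μ := padicHaar p n with hμ
  set e : ℤ := -(n:ℤ) - k - l with he
  set A : ℕ → ℕ → Set (Fin n → ℤ_[p]) := fun s t =>
    {x | (∀ i, (p:ℤ_[p]) ∣ x i - a i) ∧ (p:ℤ_[p])^s ∣ eval x f ∧ (p:ℤ_[p])^t ∣ eval x g}
    with hA
  have hM : ∀ s t : ℕ, 1 ≤ s → 1 ≤ t → μ (A s t) = (p:ENNReal) ^ ((2:ℤ) - n - s - t) :=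
    fun s t hs ht => M_formula p n f g a v w hfa hga hv1 hv0 hw0 hw1 s t hs ht
  have hMkl : μ (A k l) = (p:ENNReal)^(e+2) := by
    rw [hM k l hk hl]; congr 1; omega
  have hMk1l : μ (A (k+1) l) = (p:ENNReal)^(e+1) := by
    rw [hM (k+1) l (by omega) hl]; congr 1; push_cast; omega
  have hMkl1 : μ (A k (l+1)) = (p:ENNReal)^(e+1) := by
    rw [hM k (l+1) hk (by omega)]; congr 1; push_cast; omega
  have hMk1l1 : μ (A (k+1) (l+1)) = (p:ENNReal)^e := by
    rw [hM (k+1) (l+1) (by omega) (by omega)]; congr 1; push_cast; omega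
  have hmeasA : ∀ s t, MeasurableSet (A s t) := fun s t => meas_Aset p n f g a s t
  set T : Set (Fin n → ℤ_[p]) := {x | (∀ i, (p : ℤ_[p]) ∣ (x i - a i)) ∧
      ‖eval x f‖ = (p : ℝ) ^ (-(k : ℤ)) ∧ ‖eval x g‖ = (p : ℝ) ^ (-(l : ℤ))} with hT
  have hTmem : ∀ x, x ∈ T ↔ (∀ i, (p:ℤ_[p]) ∣ x i - a i)
      ∧ ((p:ℤ_[p])^k ∣ eval x f ∧ ¬ (p:ℤ_[p])^(k+1) ∣ eval x f)
      ∧ ((p:ℤ_[p])^l ∣ eval x g ∧ ¬ (p:ℤ_[p])^(l+1) ∣ eval x g) := by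
    intro x
    rw [hT]
    simp only [Set.mem_setOf_eq, norm_eq_pow_iff_dvd]
  set SF : Set (Fin n → ℤ_[p]) := A k (l+1) ∩ {x | ¬ (p:ℤ_[p])^(k+1) ∣ eval x f} with hSF
  have hmeasSF : MeasurableSet SF := by
    have h1 : {x : Fin n → ℤ_[p] | ¬ (p:ℤ_[p])^(k+1) ∣ eval x f}
        = {x : Fin n → ℤ_[p] | (p:ℤ_[p])^(k+1) ∣ eval x f - 0}ᶜ := by
      ext x; simp [sub_zero]
    rw [hSF, h1]
    exact (hmeasA k (l+1)).inter
      (meas_dvd_pre p n (k+1) _ (MvPolynomial.continuous_eval f) 0).compl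
  -- first split : A k (l+1) = SF ∪ A (k+1) (l+1)
  have hsplit1 : A k (l+1) = SF ∪ A (k+1) (l+1) := by
    ext x
    simp only [hSF, hA, Set.mem_union, Set.mem_inter_iff, Set.mem_setOf_eq]
    constructor
    · rintro ⟨h1, h2, h3⟩
      by_cases hc : (p:ℤ_[p])^(k+1) ∣ eval x f
      · exact Or.inr ⟨h1, hc, h3⟩
      · exact Or.inl ⟨⟨h1, h2, h3⟩, hc⟩
    · rintro (⟨⟨h1, h2, h3⟩, _⟩ | ⟨h1, h2, h3⟩)
      · exact ⟨h1, h2, h3⟩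
      · exact ⟨h1, (pow_dvd_pow _ (by omega)).trans h2, h3⟩
  have hdisj1 : Disjoint SF (A (k+1) (l+1)) := by
    rw [Set.disjoint_left]
    rintro x ⟨_, hnd⟩ ⟨_, hd, _⟩
    exact hnd hd
  have heq1 : μ SF + μ (A (k+1) (l+1)) = μ (A k (l+1)) := by
    rw [hsplit1]
    exact (measure_union hdisj1 (hmeasA (k+1) (l+1))).symm
  have hPfin : (p:ENNReal)^e ≠ ⊤ := (ENNReal.zpow_lt_top hp0 hpt e).ne
  have hq : ((p:ENNReal) - 1) + 1 = p := tsub_add_cancel_of_le hp1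
  have hqfin : (p:ENNReal) - 1 ≠ ⊤ := (lt_of_le_of_lt tsub_le_self hpt.lt_top).ne
  have hSFval : μ SF = (p:ENNReal)^e * ((p:ENNReal) - 1) := by
    have h2 : (p:ENNReal)^e * ((p:ENNReal)-1) + (p:ENNReal)^e = (p:ENNReal)^(e+1) := by
      rw [ENNReal.zpow_add hp0 hpt, zpow_one]
      calc (p:ENNReal)^e * ((p:ENNReal)-1) + (p:ENNReal)^e
          = (p:ENNReal)^e * (((p:ENNReal)-1) + 1) := by ring
        _ = (p:ENNReal)^e * p := by rw [hq]
    rw [hMk1l1, hMkl1, ← h2] at heq1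
    exact (ENNReal.add_left_inj hPfin).mp heq1
  -- second split : A k l = (T ∪ SF) ∪ A (k+1) l
  have hsplit2 : A k l = (T ∪ SF) ∪ A (k+1) l := by
    ext x
    simp only [hSF, hA, Set.mem_union, Set.mem_inter_iff, Set.mem_setOf_eq, hTmem x]
    constructor
    · rintro ⟨h1, h2, h3⟩
      by_cases hcf : (p:ℤ_[p])^(k+1) ∣ eval x f
      · exact Or.inr ⟨h1, hcf, h3⟩
      · by_cases hcg : (p:ℤ_[p])^(l+1) ∣ eval x g
        · exact Or.inl (Or.inr ⟨⟨h1, h2, hcg⟩, hcf⟩)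
        · exact Or.inl (Or.inl ⟨h1, ⟨h2, hcf⟩, ⟨h3, hcg⟩⟩)
    · rintro ((⟨h1, ⟨h2, _⟩, ⟨h3, _⟩⟩ | ⟨⟨h1, h2, h3⟩, _⟩) | ⟨h1, h2, h3⟩)
      · exact ⟨h1, h2, h3⟩
      · exact ⟨h1, h2, (pow_dvd_pow _ (by omega)).trans h3⟩
      · exact ⟨h1, (pow_dvd_pow _ (by omega)).trans h2, h3⟩
  have hdisjTS : Disjoint T SF := by
    rw [Set.disjoint_left]
    intro x hxT hxS
    obtain ⟨_, _, _, hng⟩ := (hTmem x).mp hxT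
    exact hng hxS.1.2.2
  have hdisj2 : Disjoint (T ∪ SF) (A (k+1) l) := by
    rw [Set.disjoint_left]
    rintro x (hxT | hxS) ⟨_, hd, _⟩
    · exact ((hTmem x).mp hxT).2.1.2 hd
    · exact hxS.2 hd
  have heq2 : (μ T + μ SF) + μ (A (k+1) l) = μ (A k l) := by
    rw [hsplit2, measure_union hdisj2 (hmeasA (k+1) l),
      measure_union hdisjTS hmeasSF]
  -- final computation
  have hkey : ((p:ENNReal)^e * ((p:ENNReal)-1)^2 + (p:ENNReal)^e * ((p:ENNReal)-1))
      + (p:ENNReal)^(e+1) = (p:ENNReal)^(e+2) := by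
    have hp2 : (p:ENNReal)^(2:ℤ) = (p:ENNReal) * (p:ENNReal) := by
      rw [show (2:ℤ) = 1 + 1 from rfl, ENNReal.zpow_add hp0 hpt, zpow_one]
    rw [ENNReal.zpow_add hp0 hpt e 1, ENNReal.zpow_add hp0 hpt e 2, zpow_one, hp2]
    generalize (p:ENNReal)^e = P
    generalize hQ : ((p:ENNReal) - 1) = q at hq ⊢
    rw [← hq]
    ring
  rw [hMkl, hMk1l, hSFval] at heq2
  have hXfin : (p:ENNReal)^e * ((p:ENNReal)-1) + (p:ENNReal)^(e+1) ≠ ⊤ :=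
    ENNReal.add_ne_top.mpr ⟨ENNReal.mul_ne_top hPfin hqfin, (ENNReal.zpow_lt_top hp0 hpt _).ne⟩
  have hfinal : μ T + ((p:ENNReal)^e * ((p:ENNReal)-1) + (p:ENNReal)^(e+1))
      = (p:ENNReal)^e * ((p:ENNReal)-1)^2
        + ((p:ENNReal)^e * ((p:ENNReal)-1) + (p:ENNReal)^(e+1)) := by
    rw [← add_assoc, ← add_assoc, heq2, hkey]
  have := (ENNReal.add_left_inj hXfin).mp hfinal
  rw [show (p:ENNReal) ^ (-(n : ℤ) - (k : ℤ) - (l : ℤ)) = (p:ENNReal)^e from rfl]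
  exact this
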